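/- Let u be the parent of a weakly t_1-stable vertex v in a perfect binary tree, let t_2 > t_1 with t_2 ≡ t_1 (mod 2), and suppose ξ_t(u) = ξ_{t_1}(v) for every t ∈ {t_1+1, t_1+3, ..., t_2−1}. Then ξ_{t_2}(v) = ξ_{t_1}(v). -/

import Mathlib

open SimpleGraph Set

variable {V : Type*} {G : SimpleGraph V}

/-- The majority-dynamics process generated by the initial opinion vector `σ`:
`ξ (t+1) v` is the sign of the sum of the opinions `ξ t` over the neighbours of `v`. -/
noncomputable def dyn (G : SimpleGraph V) (σ : V → ℤ) : ℕ → V → ℤ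
  | 0 => σ
  | t + 1 => fun v => if 0 < ∑ᶠ u ∈ G.neighborSet v, dyn G σ t u then 1 else -1

/-- `σ` is a valid vector of opinions, i.e. takes values in `{-1, 1}`. -/
def PM (σ : V → ℤ) : Prop := ∀ v, σ v = 1 ∨ σ v = -1

/-- The degree of a vertex. -/
noncomputable def degree' (G : SimpleGraph V) (v : V) : ℕ := (G.neighborSet v).ncard

/-- A leaf is a vertex of degree 1. -/
def IsLeaf (G : SimpleGraph V) (v : V) : Prop := degree' G v = 1

/-- The number of neighbours of `v` that are leaves. -/
noncomputable def leafNbrs (G : SimpleGraph V) (v : V) : ℕ := {u | G.Adj v u ∧ IsLeaf G u}.ncard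

/-- All degrees of `G` are odd. -/
def OddDegrees (G : SimpleGraph V) : Prop := ∀ v, Odd (degree' G v)

/-- `v` is `t`-stable for the process `ξ`. -/
def Stable (ξ : ℕ → V → ℤ) (v : V) (t : ℕ) : Prop :=
  ∀ s, t ≤ s → s % 2 = t % 2 → ξ (s + 2) v = ξ s v

/-- `G` is a perfect `k`-ary tree of height `h` rooted at `R`. -/
noncomputable def IsPerfectKAry (G : SimpleGraph V) (R : V) (k h : ℕ) : Prop :=
  G.IsTree ∧ (∀ v, degree' G v = 1 ∨ degree' G v = k + 1) ∧
    (∀ v, degree' G v = 1 → G.dist R v = h) ∧ degree' G R = k + 1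

/-- The set of descendants of `v` (including `v`) in the tree rooted at `R`:
those vertices `u` such that `v` lies on the (unique) geodesic from `R` to `u`. -/
noncomputable def desc (G : SimpleGraph V) (R v : V) : Set V :=
  {u | G.dist R u = G.dist R v + G.dist v u}

/-- `p` is the parent of `c` in the tree rooted at `R`. -/
noncomputable def IsParent (G : SimpleGraph V) (R p c : V) : Prop :=
  G.Adj p c ∧ G.dist R p + 1 = G.dist R c

/-- `v` is weakly `t`-stable for the process `ξ` (in the tree rooted at `R`): there is a
vector of initial opinions agreeing with `ξ t` on the subtree of descendants of `v` for
which `v` is 0-stable. -/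
noncomputable def WeaklyStable (G : SimpleGraph V) (R : V) (ξ : ℕ → V → ℤ) (v : V)
    (t : ℕ) : Prop :=
  ∃ σ' : V → ℤ, PM σ' ∧ (∀ w ∈ desc G R v, σ' w = ξ t w) ∧
    ∀ s, s % 2 = 0 → dyn G σ' (s + 2) v = dyn G σ' s v

lemma tree_path_length (hG : G.IsTree) {x y : V} (p : G.Walk x y) (hp : p.IsPath) :
    p.length = G.dist x y := by
  obtain ⟨q, hq, hql⟩ := (hG.isConnected x y).exists_path_of_dist
  rw [(hG.existsUnique_path x y).unique hp hq, hql]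

lemma tree_dist_add_of_mem_support (hG : G.IsTree) {x y v : V} (p : G.Walk x y)
    (hp : p.IsPath) (hv : v ∈ p.support) : G.dist x y = G.dist x v + G.dist v y := by
  classical
  have h1 := hp.takeUntil hv
  have h2 := hp.dropUntil hv
  have hlen := congrArg Walk.length (p.take_spec hv)
  rw [Walk.length_append] at hlen
  rw [← tree_path_length hG p hp, ← hlen, tree_path_length hG _ h1, tree_path_length hG _ h2]

lemma tree_adj_cases (hG : G.IsTree) {x w n : V} (hnw : G.Adj n w) (p : G.Walk x w)
    (hp : p.IsPath) :
    (n ∈ p.support ∧ G.dist x w = G.dist x n + 1) ∨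
      (n ∉ p.support ∧ G.dist x n = G.dist x w + 1) := by
  by_cases hmem : n ∈ p.support
  · left
    refine ⟨hmem, ?_⟩
    have := tree_dist_add_of_mem_support hG p hp hmem
    rwa [SimpleGraph.dist_eq_one_iff_adj.mpr hnw] at this
  · right
    refine ⟨hmem, ?_⟩
    have hq : (p.concat hnw.symm).IsPath := by
      rw [Walk.isPath_def, Walk.support_concat]
      exact List.Nodup.append hp.support_nodup (List.nodup_singleton n)
        (by simpa using hmem)
    have := tree_path_length hG _ hq
    rw [Walk.length_concat, tree_path_length hG p hp] at this
    omega

lemma tree_mem_support_of_dist (hG : G.IsTree) {R v : V} :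
    ∀ b : ℕ, ∀ w : V, ∀ p : G.Walk R w, p.IsPath → G.dist v w = b →
      G.dist R w = G.dist R v + b → v ∈ p.support := by
  classical
  intro b
  induction b using Nat.strong_induction_on with
  | _ b ih =>
    intro w p hp hb hd
    rcases Nat.eq_zero_or_pos b with hb0 | hbpos
    · subst hb0
      have : v = w := ((hG.isConnected v w).dist_eq_zero_iff).mp hb
      subst this
      exact p.end_mem_support
    · have hvw : v ≠ w := by
        rintro rfl; rw [SimpleGraph.dist_self] at hb; omega
      obtain ⟨q, hq, hql⟩ := (hG.isConnected v w).exists_path_of_dist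
      have hqr : q.reverse.IsPath := hq.reverse
      obtain ⟨m, h, r, hqr_eq⟩ := Walk.exists_eq_cons_of_ne (Ne.symm hvw) q.reverse
      have hr : r.IsPath := by
        rw [hqr_eq] at hqr; exact hqr.of_cons
      have hrl : r.length = G.dist m v := tree_path_length hG r hr
      have hql' : q.reverse.length = b := by rw [Walk.length_reverse, hql, hb]
      have hrb : G.dist v m = b - 1 := by
        rw [hqr_eq] at hql'; simp only [Walk.length_cons] at hql'
        rw [SimpleGraph.dist_comm, ← hrl]; omega
      rcases tree_adj_cases hG h.symm p hp with ⟨hmem, hd1⟩ | ⟨-, hd2⟩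
      · have hp' := hp.takeUntil hmem
        have : v ∈ (p.takeUntil m hmem).support :=
          ih (b - 1) (by omega) m _ hp' hrb (by omega)
        exact p.support_takeUntil_subset hmem this
      · have htri := (hG.isConnected).dist_triangle (u := R) (v := v) (w := m)
        rw [hrb] at htri
        omega

lemma tree_desc_closure (hG : G.IsTree) {R v w n : V}
    (hd : G.dist R w = G.dist R v + G.dist v w) (hne : w ≠ v) (hadj : G.Adj n w) :
    G.dist R n = G.dist R v + G.dist v n ∧
      (G.dist v n + 1 = G.dist v w ∨ G.dist v n = G.dist v w + 1) := by
  classical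
  have hb : 0 < G.dist v w :=
    (hG.isConnected).pos_dist_of_ne (Ne.symm hne)
  obtain ⟨pv, hpv, hpvl⟩ := (hG.isConnected v w).exists_path_of_dist
  have htri1 := (hG.isConnected).dist_triangle (u := R) (v := v) (w := n)
  have htri2 := (hG.isConnected).dist_triangle (u := R) (v := n) (w := w)
  have hnw1 : G.dist n w = 1 := SimpleGraph.dist_eq_one_iff_adj.mpr hadj
  rcases tree_adj_cases hG hadj pv hpv with ⟨-, ha⟩ | ⟨hnotmem, hbcase⟩
  · constructor
    · omega
    · left; omega
  · refine ⟨?_, Or.inr hbcase⟩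
    obtain ⟨p, hp, hpl⟩ := (hG.isConnected R w).exists_path_of_dist
    rcases tree_adj_cases hG hadj p hp with ⟨hmem, hd1⟩ | ⟨-, hd2⟩
    · exfalso
      have hvmem : v ∈ p.support :=
        tree_mem_support_of_dist hG (G.dist v w) w p hp rfl hd
      rw [← p.take_spec hmem, Walk.mem_support_append_iff] at hvmem
      rcases hvmem with hv1 | hv2
      · have := tree_dist_add_of_mem_support hG _ (hp.takeUntil hmem) hv1
        omega
      · have h2 := tree_dist_add_of_mem_support hG _ (hp.dropUntil hmem) hv2
        have hc : G.dist n v = G.dist v n := SimpleGraph.dist_comm (u := n) (v := v)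
        rw [hnw1] at h2
        omega
    · omega

lemma tree_parent_unique (hG : G.IsTree) {R v u n : V} (hu : G.Adj u v)
    (hud : G.dist R u + 1 = G.dist R v) (hn : G.Adj n v)
    (hnd : G.dist R n + 1 = G.dist R v) : n = u := by
  classical
  have mkpath : ∀ m : V, G.Adj m v → G.dist R m + 1 = G.dist R v →
      ∃ q : G.Walk v R, q.IsPath ∧ q.support.tail.head? = some m := by
    intro m hm hmd
    obtain ⟨q, hq, hql⟩ := (hG.isConnected m R).exists_path_of_dist
    have hvq : v ∉ q.support := by
      intro hvq
      have := tree_dist_add_of_mem_support hG q hq hvq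
      have h1 : G.dist m v = 1 := SimpleGraph.dist_eq_one_iff_adj.mpr hm
      have h2 : G.dist v R = G.dist R v := SimpleGraph.dist_comm (u := v) (v := R)
      have h3 : G.dist m R = G.dist R m := SimpleGraph.dist_comm (u := m) (v := R)
      omega
    refine ⟨Walk.cons hm.symm q, hq.cons hvq, ?_⟩
    rw [Walk.support_cons]
    rw [q.support_eq_cons]
    rfl
  obtain ⟨q1, hq1, hh1⟩ := mkpath n hn hnd
  obtain ⟨q2, hq2, hh2⟩ := mkpath u hu hud
  have heq : q1 = q2 := (hG.existsUnique_path v R).unique hq1 hq2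
  rw [heq, hh2] at hh1
  exact (Option.some_injective _ hh1).symm

lemma tree_nbr_desc (hG : G.IsTree) {R v u n : V} (hu : G.Adj u v)
    (hud : G.dist R u + 1 = G.dist R v) (hn : G.Adj v n) (hne : n ≠ u) :
    G.dist R n = G.dist R v + G.dist v n ∧ G.dist v n = 1 := by
  have h1 : G.dist v n = 1 := SimpleGraph.dist_eq_one_iff_adj.mpr hn
  obtain ⟨p, hp, hpl⟩ := (hG.isConnected R v).exists_path_of_dist
  rcases tree_adj_cases hG hn.symm p hp with ⟨-, hd1⟩ | ⟨-, hd2⟩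
  · exact absurd (tree_parent_unique hG hu hud hn.symm (by omega)) hne
  · exact ⟨by omega, h1⟩

lemma pm_dyn {σ : V → ℤ} (hσ : PM σ) (t : ℕ) : PM (dyn G σ t) := by
  cases t with
  | zero => exact hσ
  | succ t => intro v; simp only [dyn]; split <;> simp

lemma dyn_succ (σ : V → ℤ) (t : ℕ) (w : V) :
    dyn G σ (t + 1) w = if 0 < ∑ᶠ n ∈ G.neighborSet w, dyn G σ t n then 1 else -1 := rfl

lemma finsum_nbr_split [Fintype V] (f : V → ℤ) {v u : V} (hu : u ∈ G.neighborSet v) :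
    ∑ᶠ n ∈ G.neighborSet v, f n = f u + ∑ᶠ n ∈ G.neighborSet v \ {u}, f n := by
  classical
  have hFin : (G.neighborSet v).Finite := Set.toFinite _
  have h1 : G.neighborSet v = ↑hFin.toFinset := (Set.Finite.coe_toFinset hFin).symm
  have h2 : (↑hFin.toFinset : Set V) \ {u} = ↑(hFin.toFinset.erase u) := by
    rw [Finset.coe_erase]
  rw [h1, h2, finsum_mem_coe_finset, finsum_mem_coe_finset]
  exact (Finset.add_sum_erase _ f (by simpa using hu)).symm


/-- If `u` is the parent of a weakly `t₁`-stable non-root vertex `v` of a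
perfect binary tree, `t₂ > t₁` has the same parity as `t₁`, and `ξ_t(u) = ξ_{t₁}(v)` for
every `t ∈ {t₁+1, t₁+3, …, t₂-1}`, then `ξ_{t₂}(v) = ξ_{t₁}(v)`. -/
theorem maintain_weak_value [Fintype V] (G : SimpleGraph V) (R : V) (h : ℕ) (hh : 1 ≤ h)
    (hperf : IsPerfectKAry G R 2 h) (v u : V) (hv : v ≠ R) (hu : IsParent G R u v)
    (σ : V → ℤ) (hσ : PM σ) (t₁ t₂ : ℕ) (hlt : t₁ < t₂) (hpar : t₂ % 2 = t₁ % 2)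
    (hw : WeaklyStable G R (dyn G σ) v t₁)
    (hop : ∀ t, t₁ < t → t < t₂ → t % 2 ≠ t₁ % 2 → dyn G σ t u = dyn G σ t₁ v) :
    dyn G σ t₂ v = dyn G σ t₁ v := by
  classical
  obtain ⟨hT, -, -, -⟩ := hperf
  obtain ⟨σ', hpm', hagree, hstab⟩ := hw
  obtain ⟨huv, hud⟩ := hu
  have hdvv : G.dist v v = 0 := SimpleGraph.dist_self
  have hvdesc : v ∈ desc G R v := by
    show G.dist R v = G.dist R v + G.dist v v
    rw [hdvv]
    omega
  have hx' : σ' v = dyn G σ t₁ v := hagree v hvdesc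
  have hxpm : dyn G σ t₁ v = 1 ∨ dyn G σ t₁ v = -1 := hx' ▸ hpm' v
  have hstab2 : ∀ k, dyn G σ' (2 * k) v = dyn G σ t₁ v := by
    intro k
    induction k with
    | zero => simpa [dyn] using hx'
    | succ k ih =>
      have h2 := hstab (2 * k) (by omega)
      rw [show 2 * (k + 1) = 2 * k + 2 by ring, h2, ih]
  have key : ∀ s, s ≤ t₂ - t₁ → ∀ w ∈ desc G R v, (s + G.dist v w) % 2 = 0 →
      dyn G σ (t₁ + s) w = dyn G σ' s w := by
    intro s
    induction s with
    | zero =>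
      intro _ w hwdesc _
      simpa [dyn] using (hagree w hwdesc).symm
    | succ s ih =>
      intro hs w hwdesc hparw
      by_cases hwv : w = v
      · rw [hwv] at hparw ⊢
        have hsodd : s % 2 = 1 := by
          rw [hdvv] at hparw; omega
        have hu_mem : u ∈ G.neighborSet v := (SimpleGraph.mem_neighborSet _ _ _).mpr huv.symm
        have hsum : ∑ᶠ n ∈ G.neighborSet v \ {u}, dyn G σ (t₁ + s) n
            = ∑ᶠ n ∈ G.neighborSet v \ {u}, dyn G σ' s n := by
          apply finsum_mem_congr rfl
          intro n hn
          obtain ⟨hd, h1⟩ := tree_nbr_desc hT huv hud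
            ((SimpleGraph.mem_neighborSet _ _ _).mp hn.1) hn.2
          exact ih (by omega) n hd (by rw [h1]; omega)
        have hopu : dyn G σ (t₁ + s) u = dyn G σ t₁ v :=
          hop (t₁ + s) (by omega) (by omega) (by omega)
        have hLHS : dyn G σ (t₁ + (s + 1)) v =
            if 0 < dyn G σ t₁ v + ∑ᶠ n ∈ G.neighborSet v \ {u}, dyn G σ' s n then 1
            else -1 := by
          rw [show t₁ + (s + 1) = (t₁ + s) + 1 by omega, dyn_succ,
            finsum_nbr_split _ hu_mem, hopu, hsum]
        have hRHS : dyn G σ' (s + 1) v = dyn G σ t₁ v := by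
          rw [show s + 1 = 2 * ((s + 1) / 2) by omega]
          exact hstab2 _
        have hRHS2 : dyn G σ t₁ v =
            if 0 < dyn G σ' s u + ∑ᶠ n ∈ G.neighborSet v \ {u}, dyn G σ' s n then 1
            else -1 := by
          rw [← hRHS, dyn_succ, finsum_nbr_split _ hu_mem]
        have hepm : dyn G σ' s u = 1 ∨ dyn G σ' s u = -1 := pm_dyn hpm' s u
        rw [hLHS, hRHS]
        have hmain : ∀ x e S' : ℤ, (x = 1 ∨ x = -1) → (e = 1 ∨ e = -1) →
            x = (if 0 < e + S' then 1 else -1) →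
            (if 0 < x + S' then (1 : ℤ) else -1) = x := by
          intro x e S' hx he hxe
          split at hxe <;> split <;> omega
        exact hmain _ _ _ hxpm hepm hRHS2
      · have hwdesc' : G.dist R w = G.dist R v + G.dist v w := hwdesc
        rw [show t₁ + (s + 1) = (t₁ + s) + 1 by omega, dyn_succ, dyn_succ]
        have hsum : ∑ᶠ n ∈ G.neighborSet w, dyn G σ (t₁ + s) n
            = ∑ᶠ n ∈ G.neighborSet w, dyn G σ' s n := by
          apply finsum_mem_congr rfl
          intro n hn
          obtain ⟨hd, hpar2⟩ := tree_desc_closure hT hwdesc' hwv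
            ((SimpleGraph.mem_neighborSet _ _ _).mp hn).symm
          exact ih (by omega) n hd (by omega)
        rw [hsum]
  have hfin := key (t₂ - t₁) le_rfl v hvdesc (by rw [hdvv]; omega)
  rw [show t₁ + (t₂ - t₁) = t₂ by omega] at hfin
  rw [hfin, show t₂ - t₁ = 2 * ((t₂ - t₁) / 2) by omega]
  exact hstab2 _
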